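/- Let (ℱ, 𝒮), B, G^D, and S′ be as in the D-paths auxiliary construction. Then the minimum size of an (S′, B)-separator in G^D equals min over B′ ⊆ B of (|B \ B′| + Σ_{i=1}^{ℓ} x_i(B′)), where x_i(B′) is the minimum size of an (S_i, B′)-separator in G_i. -/

import Mathlib

/-- A (directed) path given as a nonempty list of pairwise-distinct vertices
with consecutive pairs being edges of the digraph `G`. -/
def IsPathList {V : Type*} (G : V → V → Prop) (p : List V) : Prop :=
  p ≠ [] ∧ p.Nodup ∧ p.Chain' G

/-- The first vertex of the list `p` belongs to `A`. -/
def FirstIn {V : Type*} (p : List V) (A : Set V) : Prop := ∃ a ∈ A, p.head? = some a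

/-- The last vertex of the list `p` belongs to `A`. -/
def LastIn {V : Type*} (p : List V) (A : Set V) : Prop := ∃ a ∈ A, p.getLast? = some a

/-- `X` is an `(A,B)`-separator in `G`: every path of `G` starting in `A` and
ending in `B` meets `X`. -/
def IsSeparator {V : Type*} (G : V → V → Prop) (A B X : Set V) : Prop :=
  ∀ p : List V, IsPathList G p → FirstIn p A → LastIn p B → ∃ v ∈ p, v ∈ X

/-- Two lists of vertices share no vertex. -/
def ListsDisjoint {V : Type*} (p q : List V) : Prop := ∀ v, v ∈ p → v ∉ q

/-- An `(ℱ,𝒮)`-respecting system of paths, encoded as a finite set of pairs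
`(i, p)` where `p` is a path of `G i` starting in `S i`, and paths assigned to
the same index (i.e. in the same part of the defining partition) are pairwise
vertex-disjoint. -/
def RespectingSys {V : Type*} {ℓ : ℕ} (G : Fin ℓ → V → V → Prop) (S : Fin ℓ → Set V)
    (P : Finset (Fin ℓ × List V)) : Prop :=
  (∀ q ∈ P, IsPathList (G q.1) q.2 ∧ FirstIn q.2 (S q.1)) ∧
  (∀ q ∈ P, ∀ q' ∈ P, q ≠ q' → q.1 = q'.1 → ListsDisjoint q.2 q'.2)

/-- A set of D-paths w.r.t. `(ℱ,𝒮)` and `B` : a respecting system whose paths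
have pairwise distinct last vertices, all lying in `B`. -/
def DPathSys {V : Type*} {ℓ : ℕ} (G : Fin ℓ → V → V → Prop) (S : Fin ℓ → Set V)
    (B : Set V) (P : Finset (Fin ℓ × List V)) : Prop :=
  RespectingSys G S P ∧ (∀ q ∈ P, LastIn q.2 B) ∧
  (∀ q ∈ P, ∀ q' ∈ P, q ≠ q' → q.2.getLast? ≠ q'.2.getLast?)

/-- The auxiliary digraph `G^D`: disjoint copies of the `G i` (on `Fin ℓ × V`),
together with the vertices of `B` (the `Sum.inr` part), with an edge from each
copy of `v` to the vertex `v ∈ B`. -/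
def AuxD {V : Type*} {ℓ : ℕ} (G : Fin ℓ → V → V → Prop) (B : Set V) :
    (Fin ℓ × V) ⊕ V → (Fin ℓ × V) ⊕ V → Prop :=
  fun x y => match x, y with
  | Sum.inl (i, u), Sum.inl (j, v) => i = j ∧ G i u v
  | Sum.inl (_, u), Sum.inr v => u = v ∧ v ∈ B
  | _, _ => False

/-- The copies of the source sets inside the respective copies of the `G i`. -/
def AuxS {V : Type*} {ℓ : ℕ} (S : Fin ℓ → Set V) : Set ((Fin ℓ × V) ⊕ V) :=
  {w | ∃ i, ∃ s ∈ S i, w = Sum.inl (i, s)}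

private lemma isSeparator_univ {V : Type*} (G : V → V → Prop) (A C : Set V) :
    IsSeparator G A C Set.univ := by
  intro p hp _ _
  cases p with
  | nil => exact absurd rfl hp.1
  | cons a t => exact ⟨a, by simp, trivial⟩

private lemma ncard_fiber {V : Type*} [Fintype V] {ℓ : ℕ} (Y : Fin ℓ → Set V) :
    {p : Fin ℓ × V | p.2 ∈ Y p.1}.ncard = ∑ i, (Y i).ncard := by
  classical
  have h : {p : Fin ℓ × V | p.2 ∈ Y p.1}
      = ↑(Finset.univ.biUnion fun i => {i} ×ˢ (Y i).toFinite.toFinset) := by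
    ext ⟨i, v⟩
    simp only [Set.mem_setOf_eq, Finset.mem_coe, Finset.mem_biUnion, Finset.mem_univ,
      true_and, Finset.mem_product, Finset.mem_singleton, Set.Finite.mem_toFinset]
    constructor
    · exact fun h => ⟨i, rfl, h⟩
    · rintro ⟨j, rfl, h⟩
      exact h
  rw [h, Set.ncard_coe_finset, Finset.card_biUnion]
  · refine Finset.sum_congr rfl fun i _ => ?_
    rw [Finset.singleton_product, Finset.card_map, Set.ncard_eq_toFinset_card]
  · intro i _ j _ hij
    simp only [Finset.disjoint_left]
    rintro ⟨a, b⟩ ha hb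
    simp only [Finset.mem_product, Finset.mem_singleton] at ha hb
    exact hij (ha.1 ▸ hb.1 ▸ rfl)

private lemma ncard_inl_inr {V : Type*} [Fintype V] {ℓ : ℕ}
    (T : Set (Fin ℓ × V)) (C : Set V) :
    ((Sum.inl '' T ∪ Sum.inr '' C : Set ((Fin ℓ × V) ⊕ V))).ncard = T.ncard + C.ncard := by
  rw [Set.ncard_union_eq ?_ (Set.toFinite _) (Set.toFinite _),
    Set.ncard_image_of_injective _ Sum.inl_injective,
    Set.ncard_image_of_injective _ Sum.inr_injective]
  rw [Set.disjoint_left]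
  rintro x ⟨a, _, rfl⟩ ⟨b, _, h⟩
  exact Sum.inl_ne_inr h.symm

private lemma lift_path {V : Type*} {ℓ : ℕ} (G : Fin ℓ → V → V → Prop) (B : Set V)
    (i : Fin ℓ) (q : List V) (b : V) (hq : IsPathList (G i) q) (hlast : q.getLast? = some b)
    (hb : b ∈ B) :
    IsPathList (AuxD G B) (q.map (fun v => Sum.inl (i, v)) ++ [Sum.inr b]) := by
  obtain ⟨hne, hnd, hch⟩ := hq
  refine ⟨by simp, ?_, ?_⟩
  · rw [List.nodup_append]
    refine ⟨hnd.map (fun a a' h => by simpa using h), List.nodup_singleton _, ?_⟩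
    intro x hx
    obtain ⟨u, _, rfl⟩ := List.mem_map.mp hx
    simp
  · unfold List.Chain'; rw [List.isChain_append]
    refine ⟨?_, List.isChain_singleton _, ?_⟩
    · rw [List.isChain_map]
      exact hch.imp fun a c h => ⟨rfl, h⟩
    · intro x hx y hy
      simp only [List.head?_cons, Option.mem_def, Option.some.injEq] at hy
      rw [List.getLast?_map, hlast] at hx
      simp only [Option.map_some, Option.mem_def, Option.some.injEq] at hx
      subst hx; subst hy
      exact ⟨rfl, hb⟩

private lemma decomp_path {V : Type*} {ℓ : ℕ} (G : Fin ℓ → V → V → Prop) (B : Set V) :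
    ∀ (p : List ((Fin ℓ × V) ⊕ V)), List.Chain' (AuxD G B) p →
      ∀ i s b, p.head? = some (Sum.inl (i, s)) → p.getLast? = some (Sum.inr b) →
      ∃ q : List V, p = q.map (fun v => Sum.inl (i, v)) ++ [Sum.inr b] ∧
        q.head? = some s ∧ q.getLast? = some b ∧ List.Chain' (G i) q ∧ b ∈ B := by
  intro p
  induction p with
  | nil => intro _ i s b h _; simp at h
  | cons x t ih =>
    intro hch i s b hhead hlast
    simp only [List.head?_cons, Option.some.injEq] at hhead
    subst hhead
    cases t with
    | nil => simp at hlast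
    | cons y t' =>
      unfold List.Chain' at hch; rw [List.isChain_cons_cons] at hch
      obtain ⟨hxy, hch'⟩ := hch
      rw [List.getLast?_cons_cons] at hlast
      cases y with
      | inl jv =>
        obtain ⟨j, v⟩ := jv
        obtain ⟨rfl, hG⟩ : i = j ∧ G i s v := hxy
        obtain ⟨q', hpeq, hq'h, hq'l, hq'ch, hbB⟩ := ih hch' i v b (by simp) hlast
        cases q' with
        | nil => simp at hq'h
        | cons a r =>
          have hav : a = v := by simpa using hq'h
          refine ⟨s :: a :: r, ?_, rfl, ?_,
            List.isChain_cons_cons.mpr ⟨by rw [hav]; exact hG, hq'ch⟩, hbB⟩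
          · simp only [List.map_cons, List.cons_append] at hpeq ⊢
            rw [hpeq]
          · rw [List.getLast?_cons_cons]; exact hq'l
      | inr c =>
        obtain ⟨rfl, hcB⟩ : s = c ∧ c ∈ B := hxy
        cases t' with
        | cons z t'' =>
          have h0 := (List.isChain_cons_cons.mp hch').1
          cases z <;> exact h0.elim
        | nil =>
          simp only [List.getLast?_singleton, Option.some.injEq, Sum.inr.injEq] at hlast
          subst hlast
          exact ⟨[s], by simp, rfl, rfl, List.isChain_singleton _, hcB⟩


/-- The minimum size of an `(S', B)`-separator in the auxiliary digraph `G^D`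
equals `min over B' ⊆ B of (|B \ B'| + Σ_i x_i(B'))`, where `x_i(B')` is the
minimum size of an `(S_i, B')`-separator in `G_i`. -/
theorem aux_min_separator {V : Type*} [Fintype V] {ℓ : ℕ}
    (G : Fin ℓ → V → V → Prop) (S : Fin ℓ → Set V) (B : Set V) :
    sInf {n : ℕ | ∃ X : Set ((Fin ℓ × V) ⊕ V),
        IsSeparator (AuxD G B) (AuxS S) (Sum.inr '' B) X ∧ X.ncard = n} =
    sInf {n : ℕ | ∃ B' ⊆ B, ∃ X : Fin ℓ → Set V,
      (∀ i, IsSeparator (G i) (S i) B' (X i)) ∧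
      n = (B \ B').ncard + ∑ i : Fin ℓ, (X i).ncard} := by
  classical
  set L := {n : ℕ | ∃ X : Set ((Fin ℓ × V) ⊕ V),
      IsSeparator (AuxD G B) (AuxS S) (Sum.inr '' B) X ∧ X.ncard = n} with hL
  set R := {n : ℕ | ∃ B' ⊆ B, ∃ X : Fin ℓ → Set V,
      (∀ i, IsSeparator (G i) (S i) B' (X i)) ∧
      n = (B \ B').ncard + ∑ i : Fin ℓ, (X i).ncard} with hR
  have hLne : L.Nonempty :=
    ⟨_, Set.univ, isSeparator_univ _ _ _, rfl⟩
  have hRne : R.Nonempty :=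
    ⟨_, B, subset_rfl, fun _ => Set.univ, fun i => isSeparator_univ _ _ _, rfl⟩
  apply le_antisymm
  · -- sInf L ≤ sInf R
    obtain ⟨B', hB'B, X', hsep, hn⟩ := Nat.sInf_mem hRne
    set X : Set ((Fin ℓ × V) ⊕ V) :=
      Sum.inl '' {p : Fin ℓ × V | p.2 ∈ X' p.1} ∪ Sum.inr '' (B \ B') with hXdef
    have hXsep : IsSeparator (AuxD G B) (AuxS S) (Sum.inr '' B) X := by
      intro p hp hfirst hlast
      obtain ⟨w, hwA, hhead⟩ := hfirst
      obtain ⟨i, s, hs, rfl⟩ := hwA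
      obtain ⟨w', ⟨b, hbB, rfl⟩, hlast'⟩ := hlast
      obtain ⟨q, hpeq, hqh, hql, hqch, hbB2⟩ :=
        decomp_path G B p hp.2.2 i s b hhead hlast'
      by_cases hb' : b ∈ B'
      · have hqpath : IsPathList (G i) q := by
          refine ⟨by rintro rfl; simp at hqh, ?_, hqch⟩
          have := hp.2.1
          rw [hpeq, List.nodup_append] at this
          exact List.Nodup.of_map _ this.1
        obtain ⟨u, huq, huX⟩ := hsep i q hqpath ⟨s, hs, hqh⟩ ⟨b, hb', hql⟩
        refine ⟨Sum.inl (i, u), ?_, Or.inl ⟨(i, u), huX, rfl⟩⟩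
        rw [hpeq, List.mem_append]
        exact Or.inl (List.mem_map.mpr ⟨u, huq, rfl⟩)
      · refine ⟨Sum.inr b, ?_, Or.inr ⟨b, ⟨hbB, hb'⟩, rfl⟩⟩
        rw [hpeq, List.mem_append]
        exact Or.inr (by simp)
    have hXcard : X.ncard = sInf R := by
      rw [hXdef, ncard_inl_inr, ncard_fiber, hn]
      ring
    calc sInf L ≤ X.ncard := Nat.sInf_le ⟨X, hXsep, rfl⟩
      _ = sInf R := hXcard
  · -- sInf R ≤ sInf L
    obtain ⟨X, hXsep, hXn⟩ := Nat.sInf_mem hLne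
    set B' : Set V := {v | v ∈ B ∧ Sum.inr v ∉ X} with hB'def
    set X' : Fin ℓ → Set V := fun i => {v | Sum.inl (i, v) ∈ X} with hX'def
    have hsep : ∀ i, IsSeparator (G i) (S i) B' (X' i) := by
      intro i q hq hqfirst hqlast
      obtain ⟨b, ⟨hbB, hbX⟩, hql⟩ := hqlast
      have hp := lift_path G B i q b hq hql hbB
      obtain ⟨s, hs, hqh⟩ := hqfirst
      have hf : FirstIn (q.map (fun v => Sum.inl (i, v)) ++ [Sum.inr b]) (AuxS S) := by
        refine ⟨Sum.inl (i, s), ⟨i, s, hs, rfl⟩, ?_⟩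
        rw [List.head?_append, List.head?_map, hqh]
        rfl
      have hl : LastIn (q.map (fun v => Sum.inl (i, v)) ++ [Sum.inr b]) (Sum.inr '' B) :=
        ⟨Sum.inr b, ⟨b, hbB, rfl⟩, List.getLast?_concat⟩
      obtain ⟨v, hvp, hvX⟩ := hXsep _ hp hf hl
      rcases List.mem_append.mp hvp with hv | hv
      · obtain ⟨u, huq, rfl⟩ := List.mem_map.mp hv
        exact ⟨u, huq, hvX⟩
      · simp only [List.mem_singleton] at hv
        subst hv
        exact absurd hvX hbX
    have hB'B : B' ⊆ B := fun v hv => hv.1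
    have hcard : (B \ B').ncard + ∑ i, (X' i).ncard ≤ X.ncard := by
      have hsub : (Sum.inl '' {p : Fin ℓ × V | p.2 ∈ X' p.1} ∪ Sum.inr '' (B \ B')
          : Set ((Fin ℓ × V) ⊕ V)) ⊆ X := by
        rintro w (⟨⟨i, u⟩, hu, rfl⟩ | ⟨v, hv, rfl⟩)
        · exact hu
        · by_contra h
          exact hv.2 ⟨hv.1, h⟩
      calc (B \ B').ncard + ∑ i, (X' i).ncard
          = (Sum.inl '' {p : Fin ℓ × V | p.2 ∈ X' p.1} ∪ Sum.inr '' (B \ B')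
            : Set ((Fin ℓ × V) ⊕ V)).ncard := by
            rw [ncard_inl_inr, ncard_fiber]; ring
        _ ≤ X.ncard := Set.ncard_le_ncard hsub (Set.toFinite X)
    calc sInf R ≤ (B \ B').ncard + ∑ i, (X' i).ncard :=
          Nat.sInf_le ⟨B', hB'B, X', hsep, rfl⟩
      _ ≤ X.ncard := hcard
      _ = sInf L := hXn
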